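/- If (X₁, X₂) has the joint CDF F(x₁, x₂) = exp(λ₁(g(x₁)−g(b)) + λ₂(g(x₂)−g(b)) + λ₁₂ max(g(x₁)−g(b), g(x₂)−g(b))), then X₁ and X₂ are independent (i.e., F(x₁, x₂) = F(x₁, b)·F(b, x₂) for all x₁, x₂) if and only if λ₁₂ = 0. -/
import Mathlib


/-- Remark 3.1: for the joint CDF
`F x₁ x₂ = exp (λ₁(g x₁ - g b) + λ₂(g x₂ - g b) + λ₁₂ max (g x₁ - g b) (g x₂ - g b))`
with `g` strictly increasing on `(a, b]` and `a < b`, the coordinates are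
independent — i.e. `F x₁ x₂ = F x₁ b * F b x₂` for all `x₁, x₂ ∈ (a, b)` —
if and only if `λ₁₂ = 0`. -/
theorem independence_iff_lambda12_zero
    (a b : ℝ) (hab : a < b)
    (g : ℝ → ℝ) (hg_mono : StrictMonoOn g (Set.Ioc a b))
    (lam₁ lam₂ lam₁₂ : ℝ) (h₁ : 0 < lam₁) (h₂ : 0 < lam₂) (h₁₂ : 0 ≤ lam₁₂)
    (F : ℝ → ℝ → ℝ)
    (hF : ∀ x₁ x₂ : ℝ, F x₁ x₂ =
      Real.exp (lam₁ * (g x₁ - g b) + lam₂ * (g x₂ - g b)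
        + lam₁₂ * max (g x₁ - g b) (g x₂ - g b))) :
    (∀ x₁ ∈ Set.Ioo a b, ∀ x₂ ∈ Set.Ioo a b, F x₁ x₂ = F x₁ b * F b x₂)
      ↔ lam₁₂ = 0 := by
  constructor
  · intro hind
    set x := (a + b) / 2 with hx
    have hxm : x ∈ Set.Ioo a b := ⟨by linarith, by linarith⟩
    have hgx : g x < g b := hg_mono ⟨hxm.1, le_of_lt hxm.2⟩ ⟨hab, le_refl b⟩ hxm.2
    have hd : g x - g b < 0 := by linarith
    have h := hind x hxm x hxm
    rw [hF x x, hF x b, hF b x, ← Real.exp_add] at h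
    have h' := Real.exp_injective h
    rw [max_self] at h'
    have hbb : g b - g b = 0 := by ring
    rw [hbb] at h'
    rw [max_eq_right (le_of_lt hd), max_eq_left (le_of_lt hd)] at h'
    have : lam₁₂ * (g x - g b) = 0 := by linarith
    rcases mul_eq_zero.1 this with h0 | h0
    · exact h0
    · exact absurd h0 (ne_of_lt hd)
  · intro h0 x₁ _ x₂ _
    rw [hF x₁ x₂, hF x₁ b, hF b x₂, ← Real.exp_add, h0]
    congr 1
    ring_nf
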